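/- Let g be a Lie algebra over a field of characteristic zero with Lie subalgebras g₁ and g₂ satisfying [g₁, g₂] ⊆ g₂ and [g₂, g₂] = 0. Then for X ∈ g₁ and Y ∈ g₂ (in a setting where the relevant exponentials converge, e.g., X and Y act as locally finite or formally nilpotent operators, or in a formal-parameter completion), exp(X + Y) = exp(X) · exp(Σ_{n≥1} ((−1)^{n−1}/n!) ad_X^{n−1}(Y)). -/

import Mathlib

/-- Formal exponential of a power series over a (possibly noncommutative) ℚ-algebra,
valid when the constant term vanishes (and for series of the form `tX`),
defined coefficientwise: the coefficient of `t^m` in `exp f` is `∑_{k ≤ m} coeff_m(f^k)/k!`. -/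
noncomputable def pexpN {A : Type*} [Ring A] [Algebra ℚ A] (f : PowerSeries A) :
    PowerSeries A :=
  PowerSeries.mk fun m => ∑ k ∈ Finset.range (m + 1),
    (k.factorial : ℚ)⁻¹ • PowerSeries.coeff m (f ^ k)

attribute [local instance 100] LieRing.ofAssociativeRing

namespace Stmt3Aux

open PowerSeries Finset

variable {A : Type*} [Ring A] [Algebra ℚ A]

/-- Formal derivative of a power series, defined coefficientwise. -/
noncomputable def D (F : PowerSeries A) : PowerSeries A :=
  PowerSeries.mk fun n => ((n : ℚ) + 1) • PowerSeries.coeff (n + 1) F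

@[simp] lemma coeff_D (F : PowerSeries A) (n : ℕ) :
    PowerSeries.coeff n (D F) = ((n : ℚ) + 1) • PowerSeries.coeff (n + 1) F := by
  simp [D]

lemma fact_helper (n : ℕ) :
    ((n : ℚ) + 1) * (((n + 1).factorial : ℚ))⁻¹ = ((n.factorial : ℚ))⁻¹ := by
  rw [Nat.factorial_succ]
  push_cast
  rw [mul_inv, ← mul_assoc, mul_inv_cancel₀ (by positivity), one_mul]

lemma D_C (a : A) : D (C a) = 0 := by
  ext n
  simp [coeff_C]

lemma D_mul (F G : PowerSeries A) : D (F * G) = D F * G + F * D G := by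
  ext n
  simp only [coeff_D, map_add, coeff_mul, Finset.smul_sum]
  have h1 : ∀ p : ℕ × ℕ, p ∈ antidiagonal (n + 1) →
      ((n : ℚ) + 1) • (coeff p.1 F * coeff p.2 G) =
        (p.1 : ℚ) • (coeff p.1 F * coeff p.2 G) +
          (p.2 : ℚ) • (coeff p.1 F * coeff p.2 G) := by
    intro p hp
    rw [HasAntidiagonal.mem_antidiagonal] at hp
    rw [← add_smul]
    congr 1
    have : ((n : ℚ) + 1) = ((n + 1 : ℕ) : ℚ) := by push_cast; ring
    rw [this, ← hp]
    push_cast; ring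
  rw [Finset.sum_congr rfl h1, Finset.sum_add_distrib]
  rw [Finset.Nat.sum_antidiagonal_succ
    (f := fun p => (p.1 : ℚ) • (coeff p.1 F * coeff p.2 G))]
  rw [Finset.Nat.sum_antidiagonal_succ'
    (f := fun p => (p.2 : ℚ) • (coeff p.1 F * coeff p.2 G))]
  simp only [Nat.cast_zero, zero_smul, zero_add, add_zero, Nat.cast_add, Nat.cast_one]
  congr 1
  · exact Finset.sum_congr rfl fun p _ => by rw [smul_mul_assoc]
  · exact Finset.sum_congr rfl fun p _ => by rw [mul_smul_comm]

lemma ode_left {u F G : PowerSeries A} (hF : D F = u * F) (hG : D G = u * G)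
    (h0 : PowerSeries.coeff 0 F = PowerSeries.coeff 0 G) : F = G := by
  ext n
  induction n using Nat.strong_induction_on with
  | _ n ih =>
    match n with
    | 0 => exact h0
    | n + 1 =>
      have hc : PowerSeries.coeff n (D F) = PowerSeries.coeff n (D G) := by
        rw [hF, hG, coeff_mul, coeff_mul]
        refine Finset.sum_congr rfl fun p hp => ?_
        rw [HasAntidiagonal.mem_antidiagonal] at hp
        rw [ih p.2 (by omega)]
      simp only [coeff_D] at hc
      have hne : ((n : ℚ) + 1) ≠ 0 := by positivity
      calc PowerSeries.coeff (n + 1) F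
          = ((n : ℚ) + 1)⁻¹ • (((n : ℚ) + 1) • PowerSeries.coeff (n + 1) F) :=
            (inv_smul_smul₀ hne _).symm
        _ = ((n : ℚ) + 1)⁻¹ • (((n : ℚ) + 1) • PowerSeries.coeff (n + 1) G) := by rw [hc]
        _ = PowerSeries.coeff (n + 1) G := inv_smul_smul₀ hne _

lemma ode_right {u F G : PowerSeries A} (hF : D F = F * u) (hG : D G = G * u)
    (h0 : PowerSeries.coeff 0 F = PowerSeries.coeff 0 G) : F = G := by
  ext n
  induction n using Nat.strong_induction_on with
  | _ n ih =>
    match n with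
    | 0 => exact h0
    | n + 1 =>
      have hc : PowerSeries.coeff n (D F) = PowerSeries.coeff n (D G) := by
        rw [hF, hG, coeff_mul, coeff_mul]
        refine Finset.sum_congr rfl fun p hp => ?_
        rw [HasAntidiagonal.mem_antidiagonal] at hp
        rw [ih p.1 (by omega)]
      simp only [coeff_D] at hc
      have hne : ((n : ℚ) + 1) ≠ 0 := by positivity
      calc PowerSeries.coeff (n + 1) F
          = ((n : ℚ) + 1)⁻¹ • (((n : ℚ) + 1) • PowerSeries.coeff (n + 1) F) :=
            (inv_smul_smul₀ hne _).symm
        _ = ((n : ℚ) + 1)⁻¹ • (((n : ℚ) + 1) • PowerSeries.coeff (n + 1) G) := by rw [hc]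
        _ = PowerSeries.coeff (n + 1) G := inv_smul_smul₀ hne _

lemma coeff_pow_of_lt {f : PowerSeries A} (hf : PowerSeries.coeff 0 f = 0) :
    ∀ k m : ℕ, m < k → PowerSeries.coeff m (f ^ k) = 0 := by
  intro k
  induction k with
  | zero => intro m hm; omega
  | succ k ih =>
    intro m hm
    rw [pow_succ', coeff_mul]
    refine Finset.sum_eq_zero fun p hp => ?_
    rw [HasAntidiagonal.mem_antidiagonal] at hp
    match hp1 : p.1 with
    | 0 => rw [hf, zero_mul]
    | i + 1 => rw [ih p.2 (by omega), mul_zero]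

lemma D_pow {f : PowerSeries A} (hc : f * D f = D f * f) :
    ∀ k : ℕ, D (f ^ (k + 1)) = ((k : ℚ) + 1) • (D f * f ^ k) := by
  intro k
  induction k with
  | zero => simp
  | succ k ih =>
    have : f ^ (k + 1 + 1) = f * f ^ (k + 1) := by rw [pow_succ']
    rw [this, D_mul, ih, mul_smul_comm, ← mul_assoc, hc]
    have h2 : D f * f * f ^ k = D f * f ^ (k + 1) := by rw [mul_assoc, ← pow_succ']
    rw [h2]
    push_cast
    module

@[simp] lemma coeff_pexpN (f : PowerSeries A) (m : ℕ) :
    PowerSeries.coeff m (pexpN f) = ∑ k ∈ Finset.range (m + 1),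
      (k.factorial : ℚ)⁻¹ • PowerSeries.coeff m (f ^ k) := by
  simp [pexpN]

lemma coeff_zero_pexpN (f : PowerSeries A) : PowerSeries.coeff 0 (pexpN f) = 1 := by
  simp

lemma D_pexpN {f : PowerSeries A} (hf0 : PowerSeries.coeff 0 f = 0)
    (hc : f * D f = D f * f) : D (pexpN f) = D f * pexpN f := by
  ext n
  rw [coeff_D, coeff_pexpN, Finset.smul_sum]
  have lhs_eq : ∀ k ∈ Finset.range (n + 1 + 1),
      ((n : ℚ) + 1) • ((k.factorial : ℚ)⁻¹ • PowerSeries.coeff (n + 1) (f ^ k)) =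
        (k.factorial : ℚ)⁻¹ • PowerSeries.coeff n (D (f ^ k)) := by
    intro k _
    rw [coeff_D, smul_comm]
  rw [Finset.sum_congr rfl lhs_eq]
  rw [Finset.sum_range_succ' (fun k => (k.factorial : ℚ)⁻¹ • PowerSeries.coeff n (D (f ^ k)))]
  have h0 : (Nat.factorial 0 : ℚ)⁻¹ • PowerSeries.coeff n (D (f ^ 0)) = 0 := by
    simp [D]
  rw [h0, add_zero]
  have hterm : ∀ k ∈ Finset.range (n + 1),
      ((k + 1).factorial : ℚ)⁻¹ • PowerSeries.coeff n (D (f ^ (k + 1))) =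
        (k.factorial : ℚ)⁻¹ • PowerSeries.coeff n (D f * f ^ k) := by
    intro k _
    rw [D_pow hc, PowerSeries.coeff_smul, smul_smul, mul_comm, fact_helper]
  rw [Finset.sum_congr rfl hterm]
  -- now the right-hand side
  rw [coeff_mul]
  have hrhs : ∀ p : ℕ × ℕ, p ∈ antidiagonal n →
      PowerSeries.coeff p.1 (D f) * PowerSeries.coeff p.2 (pexpN f) =
        ∑ k ∈ Finset.range (n + 1),
          (k.factorial : ℚ)⁻¹ • (PowerSeries.coeff p.1 (D f) *
            PowerSeries.coeff p.2 (f ^ k)) := by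
    intro p hp
    rw [HasAntidiagonal.mem_antidiagonal] at hp
    rw [coeff_pexpN, Finset.mul_sum]
    have hsub : Finset.range (p.2 + 1) ⊆ Finset.range (n + 1) :=
      Finset.range_subset_range.2 (by omega)
    rw [Finset.sum_congr rfl
      (fun k _ => by rw [mul_smul_comm] :
        ∀ k ∈ Finset.range (p.2 + 1),
          PowerSeries.coeff p.1 (D f) * ((k.factorial : ℚ)⁻¹ • PowerSeries.coeff p.2 (f ^ k))
            = (k.factorial : ℚ)⁻¹ •
              (PowerSeries.coeff p.1 (D f) * PowerSeries.coeff p.2 (f ^ k)))]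
    refine Finset.sum_subset hsub fun k _ hk => ?_
    have : p.2 < k := by
      simp only [Finset.mem_range, not_lt] at hk
      omega
    rw [coeff_pow_of_lt hf0 k p.2 this, mul_zero, smul_zero]
  rw [Finset.sum_congr rfl hrhs, Finset.sum_comm]
  refine Finset.sum_congr rfl fun k _ => ?_
  rw [coeff_mul, Finset.smul_sum]

lemma mul_comm_of_coeffs {f h : PowerSeries A}
    (hc : ∀ i j, PowerSeries.coeff i f * PowerSeries.coeff j h =
      PowerSeries.coeff j h * PowerSeries.coeff i f) : f * h = h * f := by
  ext n
  rw [coeff_mul, coeff_mul]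
  conv_rhs => rw [← Finset.Nat.sum_antidiagonal_swap]
  exact Finset.sum_congr rfl fun p _ => hc p.1 p.2

/-! ### The exponential of `t • a` -/

lemma XC_pow (a : A) (k : ℕ) :
    (PowerSeries.X * PowerSeries.C a) ^ k = PowerSeries.X ^ k * PowerSeries.C (a ^ k) := by
  induction k with
  | zero => simp
  | succ k ih =>
    calc (PowerSeries.X * PowerSeries.C a) ^ (k + 1)
        = PowerSeries.X ^ k * PowerSeries.C (a ^ k) * (PowerSeries.X * PowerSeries.C a) := by
          rw [pow_succ, ih]
      _ = PowerSeries.X ^ k * (PowerSeries.C (a ^ k) * PowerSeries.X) * PowerSeries.C a := by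
          rw [mul_assoc, mul_assoc, mul_assoc]
      _ = PowerSeries.X ^ k * (PowerSeries.X * PowerSeries.C (a ^ k)) * PowerSeries.C a := by
          rw [(commute_X (PowerSeries.C (a ^ k))).eq]
      _ = PowerSeries.X ^ (k + 1) * PowerSeries.C (a ^ (k + 1)) := by
          rw [← mul_assoc, ← pow_succ, mul_assoc, ← map_mul, ← pow_succ]

lemma coeff_pexpN_XC (a : A) (m : ℕ) :
    PowerSeries.coeff m (pexpN (PowerSeries.X * PowerSeries.C a)) =
      ((m.factorial : ℚ))⁻¹ • a ^ m := by
  rw [coeff_pexpN]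
  have hco : ∀ k, PowerSeries.coeff m ((PowerSeries.X * PowerSeries.C a) ^ k) =
      if k = m then a ^ m else if k ≤ m then 0 else 0 := by
    intro k
    rw [XC_pow, coeff_X_pow_mul', coeff_C]
    by_cases hkm : k = m
    · subst hkm; simp
    · by_cases hle : k ≤ m
      · rw [if_pos hle, if_neg (by omega), if_neg hkm, if_pos hle]
      · rw [if_neg hle, if_neg hkm, if_neg hle]
  rw [Finset.sum_eq_single m]
  · rw [hco m, if_pos rfl]
  · intro k hk hkm
    rw [hco k, if_neg hkm]
    simp only [Finset.mem_range] at hk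
    rw [if_pos (by omega), smul_zero]
  · intro hm
    exact absurd (Finset.self_mem_range_succ m) hm

lemma D_pexpN_XC (a : A) :
    D (pexpN (PowerSeries.X * PowerSeries.C a)) =
      PowerSeries.C a * pexpN (PowerSeries.X * PowerSeries.C a) := by
  ext n
  rw [coeff_D, coeff_pexpN_XC, coeff_C_mul, coeff_pexpN_XC]
  rw [smul_smul, mul_smul_comm, ← pow_succ']
  congr 1
  exact fact_helper n

lemma pexpN_XC_comm_C (a : A) :
    pexpN (PowerSeries.X * PowerSeries.C a) * PowerSeries.C a =
      PowerSeries.C a * pexpN (PowerSeries.X * PowerSeries.C a) := by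
  ext n
  rw [coeff_mul_C, coeff_C_mul, coeff_pexpN_XC]
  rw [smul_mul_assoc, mul_smul_comm, ← pow_succ, ← pow_succ']

end Stmt3Aux

open Stmt3Aux PowerSeries Finset in
/-- Zassenhaus-type decomposition: let `A` be an associative ℚ-algebra, viewed as a
Lie algebra via the commutator bracket, and let `g₁, g₂` be Lie subalgebras with `[g₁,g₂] ⊆ g₂`
and `[g₂,g₂] = 0`. Then for `x ∈ g₁` and `y ∈ g₂`, in the formal power series ring `A[[t]]`,
`exp(t(x+y)) = exp(tx) · exp(∑_{n≥1} ((−1)^{n−1} t^n / n!) ad_x^{n−1}(y))`. -/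
theorem stmt3 {A : Type*} [Ring A] [Algebra ℚ A]
    (g₁ g₂ : LieSubalgebra ℚ A)
    (h12 : ∀ x ∈ g₁, ∀ y ∈ g₂, ⁅x, y⁆ ∈ g₂)
    (h22 : ∀ y ∈ g₂, ∀ y' ∈ g₂, ⁅y, y'⁆ = (0 : A))
    (x y : A) (hx : x ∈ g₁) (hy : y ∈ g₂) :
    pexpN (PowerSeries.X * PowerSeries.C (x + y)) =
      pexpN (PowerSeries.X * PowerSeries.C x) *
        pexpN (PowerSeries.mk fun n => if n = 0 then 0 else
          ((-1 : ℚ) ^ (n - 1) * (n.factorial : ℚ)⁻¹) •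
            ((fun v => x * v - v * x)^[n - 1] y)) := by
  set ad : A → A := fun v => x * v - v * x with had
  set g : PowerSeries A := PowerSeries.mk fun n => if n = 0 then 0 else
    ((-1 : ℚ) ^ (n - 1) * (n.factorial : ℚ)⁻¹) • (ad^[n - 1] y) with hg
  -- basic coefficient facts about g
  have hg0 : PowerSeries.coeff 0 g = 0 := by simp [hg]
  have hgsucc : ∀ n : ℕ, PowerSeries.coeff (n + 1) g =
      ((-1 : ℚ) ^ n * ((n + 1).factorial : ℚ)⁻¹) • (ad^[n] y) := by
    intro n; simp [hg]
  have hDg : ∀ n : ℕ, PowerSeries.coeff n (D g) =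
      ((-1 : ℚ) ^ n * (n.factorial : ℚ)⁻¹) • (ad^[n] y) := by
    intro n
    rw [coeff_D, hgsucc, smul_smul]
    congr 1
    rw [← mul_assoc, mul_comm ((n : ℚ) + 1) ((-1 : ℚ) ^ n), mul_assoc, fact_helper]
  -- membership of iterated brackets in g₂
  have hmem : ∀ n : ℕ, ad^[n] y ∈ g₂ := by
    intro n
    induction n with
    | zero => simpa using hy
    | succ n ih =>
      rw [Function.iterate_succ_apply']
      exact h12 x hx _ ih
  have hz : ∀ u ∈ g₂, ∀ v ∈ g₂, u * v = v * u := by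
    intro u hu v hv
    have h := h22 u hu v hv
    rw [Ring.lie_def] at h
    exact sub_eq_zero.mp h
  -- commutation of g with its derivative
  have hsmul_comm : ∀ (q r : ℚ) (u v : A), u ∈ g₂ → v ∈ g₂ →
      (q • u) * (r • v) = (r • v) * (q • u) := by
    intro q r u v hu hv
    rw [smul_mul_assoc, mul_smul_comm, smul_mul_assoc, mul_smul_comm,
      smul_smul, smul_smul, hz u hu v hv, mul_comm q r]
  have hcomm : g * D g = D g * g := by
    refine mul_comm_of_coeffs fun i j => ?_
    rw [hDg]
    match i with
    | 0 => rw [hg0, zero_mul, mul_zero]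
    | i + 1 =>
      rw [hgsucc]
      exact hsmul_comm _ _ _ _ (hmem i) (hmem j)
  -- abbreviations
  set E : PowerSeries A := pexpN (PowerSeries.X * PowerSeries.C x) with hE
  set P : PowerSeries A := pexpN g with hP
  have hDE : D E = PowerSeries.C x * E := D_pexpN_XC x
  have hECx : E * PowerSeries.C x = PowerSeries.C x * E := pexpN_XC_comm_C x
  have hDP : D P = D g * P := D_pexpN hg0 hcomm
  -- the derivative of D g :  D (D g) = D g * C x - C x * D g
  have hDDg : D (D g) = D g * PowerSeries.C x - PowerSeries.C x * D g := by
    ext n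
    rw [coeff_D, hDg, map_sub, coeff_mul_C, coeff_C_mul, hDg]
    rw [Function.iterate_succ_apply']
    have hadv : ad (ad^[n] y) = x * (ad^[n] y) - (ad^[n] y) * x := rfl
    rw [hadv, smul_mul_assoc, mul_smul_comm, ← smul_sub,
      ← neg_sub (x * ad^[n] y) ((ad^[n] y) * x), smul_neg, ← neg_smul, smul_smul]
    congr 1
    rw [pow_succ]
    have h4 : ((n : ℚ) + 1) * ((-1 : ℚ) ^ n * -1 * (((n + 1).factorial : ℚ))⁻¹)
        = ((-1 : ℚ) ^ n * -1) * (((n : ℚ) + 1) * (((n + 1).factorial : ℚ))⁻¹) := by ring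
    rw [h4, fact_helper]
    ring
  -- key identity: E * D g = C y * E
  have hkey : E * D g = PowerSeries.C y * E := by
    refine ode_right (u := PowerSeries.C x) ?_ ?_ ?_
    · rw [D_mul, hDE, hDDg, mul_sub]
      have h1 : E * (PowerSeries.C x * D g) = PowerSeries.C x * E * D g := by
        rw [← mul_assoc, hECx]
      rw [h1, ← mul_assoc]
      abel
    · rw [D_mul, D_C, zero_mul, zero_add, hDE, ← mul_assoc]
      rw [mul_assoc, ← hECx, ← mul_assoc]
    · have e1 : PowerSeries.coeff 0 E = (1 : A) := coeff_zero_pexpN _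
      have e2 : PowerSeries.coeff 0 (D g) = y := by rw [hDg]; simp
      rw [coeff_mul, coeff_mul]
      simp only [Finset.Nat.antidiagonal_zero, Finset.sum_singleton, e1, one_mul, mul_one]
      simp only [coeff_D, Nat.cast_zero, zero_add, one_smul, zero_add]
      simpa using (hgsucc 0).trans (by simp)
  -- final ODE argument
  refine ode_left (u := PowerSeries.C (x + y)) (D_pexpN_XC (x + y)) ?_ ?_
  · rw [D_mul, hDE, hDP, ← mul_assoc, hkey, map_add, add_mul, mul_assoc, mul_assoc]
  · have e1 : PowerSeries.coeff 0 E = (1 : A) := coeff_zero_pexpN _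
    have e4 : PowerSeries.coeff 0 P = (1 : A) := coeff_zero_pexpN _
    rw [coeff_zero_pexpN, coeff_mul]
    simp [e1, e4]
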